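/- arXiv:2505.02544 — 3 statements merged into one kernel-verified Lean document; each statement's English description precedes it below -/
import Mathlib

section
/- Assume a nested system of fundamental sequences on Γ with norm |·| defined by |α| = min{n > 1 : Γ ⇒_n α}. Then for any ordinals α, β ≤ Γ and any n ≥ |β|: α ≥ β if and only if α ⇒_n β. -/
open Ordinal

/-- A system of fundamental sequences on `Γ`: to each ordinal `α ≤ Γ` we associate a
non-decreasing sequence `fs α n` with `sup {fs α n + 1 : n} = α` for `α ≠ 0`, and `fs 0 n = 0`. -/
structure FSSystem (Γ : Ordinal) where
  fs : Ordinal → ℕ → Ordinal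
  fs_zero : ∀ n, fs 0 n = 0
  mono : ∀ α, α ≤ Γ → Monotone (fs α)
  sup_eq : ∀ α, α ≤ Γ → α ≠ 0 → (⨆ n : ℕ, fs α n + 1) = α

/-- The system is nested: it is never the case, for `γ < β ≤ Γ` and `n > 1`,
that `γ > β[n] > γ[n]`. -/
def FSSystem.Nested {Γ : Ordinal} (S : FSSystem Γ) : Prop :=
  ∀ γ β (n : ℕ), γ < β → β ≤ Γ → 1 < n → ¬ (S.fs γ n < S.fs β n ∧ S.fs β n < γ)

/-- Iterated evaluation `α[s_0][s_1]…[s_{m-1}]` along a list. -/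
def FSSystem.evalL {Γ : Ordinal} (S : FSSystem Γ) (α : Ordinal) (s : List ℕ) : Ordinal :=
  s.foldl S.fs α

/-- `α ⇒_n β`: `β` is obtained from `α` by finitely many applications of `δ ↦ δ[n]`. -/
def FSSystem.Reaches {Γ : Ordinal} (S : FSSystem Γ) (n : ℕ) (α β : Ordinal) : Prop :=
  ∃ k : ℕ, (fun δ => S.fs δ n)^[k] α = β

/-- The norm `|α| = min {n > 1 : Γ ⇒_n α}`. -/
noncomputable def FSSystem.norm {Γ : Ordinal} (S : FSSystem Γ) (α : Ordinal) : ℕ :=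
  sInf {n : ℕ | 1 < n ∧ S.Reaches n Γ α}

namespace FSSystem

variable {Γ : Ordinal} (S : FSSystem Γ)

lemma fs_lt {δ : Ordinal} (hδ : δ ≤ Γ) (h0 : δ ≠ 0) (n : ℕ) : S.fs δ n < δ := by
  have h : S.fs δ n + 1 ≤ ⨆ m : ℕ, S.fs δ m + 1 :=
    le_ciSup (Ordinal.bddAbove_range _) n
  rw [S.sup_eq δ hδ h0] at h
  have h2 : S.fs δ n < S.fs δ n + 1 := by
    rw [Ordinal.add_one_eq_succ]; exact Order.lt_succ _
  exact lt_of_lt_of_le h2 h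

lemma fs_le {δ : Ordinal} (hδ : δ ≤ Γ) (n : ℕ) : S.fs δ n ≤ δ := by
  rcases eq_or_ne δ 0 with rfl | h
  · simp [S.fs_zero]
  · exact (S.fs_lt hδ h n).le

lemma iterate_le (n : ℕ) : ∀ (k : ℕ) {δ : Ordinal}, δ ≤ Γ →
    (fun x => S.fs x n)^[k] δ ≤ δ := by
  intro k
  induction k with
  | zero => intro δ _; exact le_rfl
  | succ k ih =>
    intro δ hδ
    rw [Function.iterate_succ_apply]
    exact le_trans (ih (le_trans (S.fs_le hδ n) hδ)) (S.fs_le hδ n)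

/-- Goodness: if `β` is on the `n`-chain starting at `δ`, and `β < α ≤ δ ≤ Γ`,
then `β ≤ α[n]`. -/
lemma le_fs_aux (hN : S.Nested) {n : ℕ} (hn : 1 < n) :
    ∀ (k : ℕ) {δ β α : Ordinal}, δ ≤ Γ → (fun x => S.fs x n)^[k] δ = β →
      β < α → α ≤ δ → β ≤ S.fs α n := by
  intro k
  induction k with
  | zero =>
    intro δ β α hδ h hβα hαδ
    simp only [Function.iterate_zero, id_eq] at h
    subst h
    exact absurd hαδ (not_le.mpr hβα)
  | succ k ih =>
    intro δ β α hδ h hβα hαδ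
    rw [Function.iterate_succ_apply] at h
    have hfδΓ : S.fs δ n ≤ Γ := le_trans (S.fs_le hδ n) hδ
    have hβfδ : β ≤ S.fs δ n := h ▸ S.iterate_le n k hfδΓ
    rcases eq_or_lt_of_le hαδ with rfl | hαδ'
    · exact hβfδ
    · rcases le_or_gt α (S.fs δ n) with hc | hc
      · exact ih hfδΓ h hβα hc
      · have hnest := hN α δ n hαδ' hδ hn
        have h2 : S.fs δ n ≤ S.fs α n :=
          le_of_not_gt (fun hlt => hnest ⟨hlt, hc⟩)
        exact le_trans hβfδ h2

lemma reaches_of_le_fs {n : ℕ} {β : Ordinal}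
    (hB : ∀ α, β < α → α ≤ Γ → β ≤ S.fs α n) :
    ∀ α, β ≤ α → α ≤ Γ → S.Reaches n α β := by
  intro α
  induction α using Ordinal.induction with
  | h α ih =>
    intro hβα hαΓ
    rcases eq_or_lt_of_le hβα with rfl | hlt
    · exact ⟨0, rfl⟩
    · have hα0 : α ≠ 0 :=
        (pos_iff_ne_zero.mp (lt_of_le_of_lt (zero_le (a := β)) hlt))
      have hfs : S.fs α n < α := S.fs_lt hαΓ hα0 n
      obtain ⟨k, hk⟩ := ih _ hfs (hB α hlt hαΓ) (le_trans hfs.le hαΓ)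
      exact ⟨k + 1, by rw [Function.iterate_succ_apply]; exact hk⟩

/-- Every `β ≤ Γ` is reachable from `Γ` for some `n > 1`. -/
lemma exists_reaches (hN : S.Nested) {β : Ordinal} (hβ : β ≤ Γ) :
    ∃ n : ℕ, 1 < n ∧ S.Reaches n Γ β := by
  suffices haux : ∀ δ : Ordinal, β ≤ δ → δ ≤ Γ → (∃ m : ℕ, 1 < m ∧ S.Reaches m Γ δ) →
      ∃ n : ℕ, 1 < n ∧ S.Reaches n Γ β by
    exact haux Γ hβ le_rfl ⟨2, one_lt_two, 0, rfl⟩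
  intro δ
  induction δ using Ordinal.induction with
  | h δ ih =>
    intro hβδ hδΓ hreach
    rcases eq_or_lt_of_le hβδ with rfl | hlt
    · exact hreach
    · obtain ⟨m, hm1, hm2⟩ := hreach
      have hδ0 : δ ≠ 0 :=
        (pos_iff_ne_zero.mp (lt_of_le_of_lt (zero_le (a := β)) hlt))
      -- find j with β ≤ fs δ j
      have hsup : β < ⨆ j : ℕ, S.fs δ j + 1 := by
        rw [S.sup_eq δ hδΓ hδ0]; exact hlt
      obtain ⟨j, hj⟩ := (lt_ciSup_iff (Ordinal.bddAbove_range _)).mp hsup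
      have hβj : β ≤ S.fs δ j := by
        rw [Ordinal.add_one_eq_succ, Order.lt_succ_iff] at hj
        exact hj
      set n : ℕ := max j m with hn_def
      have hn1 : 1 < n := lt_of_lt_of_le hm1 (le_max_right _ _)
      have hβn : β ≤ S.fs δ n := le_trans hβj (S.mono δ hδΓ (le_max_left _ _))
      -- δ's norm set is nonempty; use its minimal element m'
      have hne : {p : ℕ | 1 < p ∧ S.Reaches p Γ δ}.Nonempty := ⟨m, hm1, hm2⟩
      obtain ⟨hm'1, k', hk'⟩ := Nat.sInf_mem hne
      have hm'n : sInf {p : ℕ | 1 < p ∧ S.Reaches p Γ δ} ≤ n :=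
        le_trans (Nat.sInf_le ⟨hm1, hm2⟩) (le_max_right _ _)
      have hB : ∀ α, δ < α → α ≤ Γ → δ ≤ S.fs α n := by
        intro α h1 h2
        have := S.le_fs_aux hN hm'1 k' le_rfl hk' h1 h2
        exact le_trans this (S.mono α h2 hm'n)
      obtain ⟨k, hk⟩ := S.reaches_of_le_fs hB Γ hδΓ le_rfl
      have hreach' : S.Reaches n Γ (S.fs δ n) :=
        ⟨k + 1, by rw [Function.iterate_succ_apply', hk]⟩
      exact ih (S.fs δ n) (S.fs_lt hδΓ hδ0 n) hβn
        (le_trans (S.fs_le hδΓ n) hδΓ) ⟨n, hn1, hreach'⟩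

end FSSystem

/-- In a nested system, for `α, β ≤ Γ` and `n ≥ |β|`: `α ≥ β` iff `α ⇒_n β`. -/
theorem nested_reaches_above_norm {Γ : Ordinal} (S : FSSystem Γ) (hN : S.Nested)
    (α β : Ordinal) (hα : α ≤ Γ) (hβ : β ≤ Γ) (n : ℕ) (hn : S.norm β ≤ n) :
    β ≤ α ↔ S.Reaches n α β := by
  constructor
  · intro hβα
    have hne : {p : ℕ | 1 < p ∧ S.Reaches p Γ β}.Nonempty := S.exists_reaches hN hβ
    obtain ⟨hm1, k', hk'⟩ := Nat.sInf_mem hne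
    have hB : ∀ α', β < α' → α' ≤ Γ → β ≤ S.fs α' n := by
      intro α' h1 h2
      have := S.le_fs_aux hN hm1 k' le_rfl hk' h1 h2
      exact le_trans this (S.mono α' h2 hn)
    exact S.reaches_of_le_fs hB α hβα hα
  · rintro ⟨k, rfl⟩
    exact S.iterate_le n k hα
end

section
/- Given a nested system of fundamental sequences on Γ, an infinite set M with min M > 1, and α ≤ Γ, let B^α be the barrier of α-size subsets of M. Then for each t ∈ T(B^α), the height of t in the tree T(B^α) equals α[t]. In particular ht(B^α) = α. -/
open Ordinal

/-- The base of a family of finite increasing sequences: all naturals occurring in it. -/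
def sbase (B : Set (List ℕ)) : Set ℕ := {n | ∃ s ∈ B, n ∈ s}

/-- A block: a non-degenerate front. Finite subsets of `ℕ` are identified with their increasing
enumerations. Every infinite subset of the base (given by its increasing enumeration `f`) has an
initial segment in `B`, and `B` is prefix-free. -/
structure IsBlock (B : Set (List ℕ)) : Prop where
  sorted : ∀ s ∈ B, s.Pairwise (· < ·)
  base_infinite : (sbase B).Infinite
  prefix_exists : ∀ f : ℕ → ℕ, StrictMono f → (∀ i, f i ∈ sbase B) →
    ∃ k, (List.range k).map f ∈ B
  prefix_free : ∀ s ∈ B, ∀ t ∈ B, s <+: t → s = t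

/-- Smoothness: for `s, t ∈ B` with `|s| < |t|` there is `i < |s|` with `s(i) < t(i)`. -/
def IsSmooth (B : Set (List ℕ)) : Prop :=
  ∀ s ∈ B, ∀ t ∈ B, s.length < t.length →
    ∃ i, ∃ (hi : i < s.length) (hi' : i < t.length), s.get ⟨i, hi⟩ < t.get ⟨i, hi'⟩

/-- The tree `T(B)`: the closure of `B` under initial segments. -/
def TreeOf (B : Set (List ℕ)) : Set (List ℕ) := {s | ∃ t ∈ B, s <+: t}

/-- The child relation on the tree `T(B)`: `t` is a one-point extension of `s` lying in `T(B)`. -/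
def childRel (B : Set (List ℕ)) (t s : List ℕ) : Prop :=
  t ∈ TreeOf B ∧ ∃ n, t = s ++ [n]

/-- The height of the node `s` in the well-founded tree `T(B)`. -/
noncomputable def nodeHt (B : Set (List ℕ)) (h : WellFounded (childRel B)) (s : List ℕ) :
    Ordinal :=
  (h.apply s).rank

/-- The height `ht(B)` of the front `B`: the height of the tree `T(B)`. -/
noncomputable def htB (B : Set (List ℕ)) (h : WellFounded (childRel B)) : Ordinal :=
  nodeHt B h []

/-- The family `B^α` of `α`-size subsets of `M`: the minimal `α`-large increasing sequences
from `M`. -/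
def sizeFam {Γ : Ordinal} (S : FSSystem Γ) (α : Ordinal) (M : Set ℕ) : Set (List ℕ) :=
  {s | s.Pairwise (· < ·) ∧ (∀ x ∈ s, x ∈ M) ∧
    S.evalL α s = 0 ∧ (s = [] ∨ S.evalL α s.dropLast ≠ 0)}


variable {Γ : Ordinal} (S : FSSystem Γ)

lemma fs_le (β : Ordinal) (hβ : β ≤ Γ) (n : ℕ) : S.fs β n ≤ β := by
  rcases eq_or_ne β 0 with rfl | h
  · simp [S.fs_zero]
  · calc S.fs β n ≤ S.fs β n + 1 := le_add_of_nonneg_right (zero_le (a := (1 : Ordinal)))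
    _ ≤ ⨆ m : ℕ, S.fs β m + 1 := Ordinal.le_iSup (fun m => S.fs β m + 1) n
    _ = β := S.sup_eq β hβ h

lemma fs_lt (β : Ordinal) (hβ : β ≤ Γ) (h : β ≠ 0) (n : ℕ) : S.fs β n < β := by
  calc S.fs β n < S.fs β n + 1 := lt_add_of_pos_right _ zero_lt_one
  _ ≤ ⨆ m : ℕ, S.fs β m + 1 := Ordinal.le_iSup (fun m => S.fs β m + 1) n
  _ = β := S.sup_eq β hβ h

lemma evalL_le (s : List ℕ) : ∀ β, β ≤ Γ → S.evalL β s ≤ Γ := by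
  induction s with
  | nil => intro β hβ; exact hβ
  | cons n s ih =>
      intro β hβ
      exact ih _ ((fs_le S β hβ n).trans hβ)

lemma evalL_append (β : Ordinal) (s u : List ℕ) :
    S.evalL β (s ++ u) = S.evalL (S.evalL β s) u := by
  simp [FSSystem.evalL, List.foldl_append]

lemma evalL_zero (u : List ℕ) : S.evalL 0 u = 0 := by
  induction u with
  | nil => rfl
  | cons n u ih => simpa [FSSystem.evalL, S.fs_zero] using ih

lemma le_foldr_max : ∀ {t : List ℕ} {x : ℕ}, x ∈ t → x ≤ t.foldr max 0 := by
  intro t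
  induction t with
  | nil => intro x hx; simp at hx
  | cons a t ih =>
      intro x hx
      rcases List.mem_cons.mp hx with rfl | hx
      · exact le_max_left _ _
      · exact (ih hx).trans (le_max_right _ _)

lemma sorted_concat {t : List ℕ} {m : ℕ} (ht : t.Pairwise (· < ·)) (hm : ∀ x ∈ t, x < m) :
    (t ++ [m]).Pairwise (· < ·) := by
  rw [List.pairwise_append]
  exact ⟨ht, List.pairwise_singleton _ _, fun a ha b hb => (List.mem_singleton.mp hb) ▸ hm a ha⟩

lemma extend (M : Set ℕ) (hM : M.Infinite) (α : Ordinal) (hα : α ≤ Γ) :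
    ∀ β t, S.evalL α t = β → t.Pairwise (· < ·) → (∀ x ∈ t, x ∈ M) →
    (t = [] ∨ S.evalL α t.dropLast ≠ 0) → ∃ u ∈ sizeFam S α M, t <+: u := by
  intro β
  induction β using Ordinal.induction with
  | h β IH =>
    intro t hβ hsort hmem hmin
    rcases eq_or_ne β 0 with rfl | hne
    · exact ⟨t, ⟨hsort, hmem, hβ, hmin⟩, List.prefix_refl t⟩
    · obtain ⟨m, hm⟩ := (hM.diff (Set.finite_Iic (t.foldr max 0))).nonempty
      rw [Set.mem_diff, Set.mem_Iic] at hm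
      obtain ⟨hmM, hmk'⟩ := hm
      have hmk : t.foldr max 0 < m := not_le.mp hmk'
      have hlt : ∀ x ∈ t, x < m := fun x hx => lt_of_le_of_lt (le_foldr_max hx) hmk
      have hβΓ : β ≤ Γ := hβ ▸ evalL_le S t α hα
      have hev : S.evalL α (t ++ [m]) = S.fs β m := by
        rw [evalL_append, hβ]; rfl
      obtain ⟨u, hu, hpre⟩ := IH (S.fs β m) (fs_lt S β hβΓ hne m) (t ++ [m]) hev
        (sorted_concat hsort hlt)
        (by intro x hx
            rcases List.mem_append.mp hx with hx | hx
            · exact hmem x hx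
            · exact (List.mem_singleton.mp hx) ▸ hmM)
        (Or.inr (by rw [List.dropLast_concat, hβ]; exact hne))
      exact ⟨u, hu, ((t.prefix_append [m]).trans hpre)⟩

/-- For a nested system and the barrier `B^α` of `α`-size subsets of `M`, the height of each
node `t` of `T(B^α)` equals `α[t]`; in particular `ht(B^α) = α`. -/
theorem sizeFam_nodeHt {Γ : Ordinal} (S : FSSystem Γ) (hN : S.Nested)
    (M : Set ℕ) (hM : M.Infinite) (hM1 : ∀ m ∈ M, 1 < m)
    (α : Ordinal) (hα : α ≤ Γ)
    (hwf : WellFounded (childRel (sizeFam S α M))) :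
    (∀ t ∈ TreeOf (sizeFam S α M), nodeHt (sizeFam S α M) hwf t = S.evalL α t) ∧
      htB (sizeFam S α M) hwf = α := by

  set B := sizeFam S α M with hB
  have rank_eq : ∀ t, nodeHt B hwf t
      = ⨆ b : {b // childRel B b t}, Order.succ (nodeHt B hwf b.1) :=
    fun t => (hwf.apply t).rank_eq
  have no_child : ∀ t, S.evalL α t = 0 → ∀ c, ¬ childRel B c t := by
    rintro t h0 c ⟨⟨u, hu, hpre⟩, n, rfl⟩
    obtain ⟨r, hr⟩ := hpre
    have hune : u ≠ [] := by
      intro h; rw [h] at hr; simp at hr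
    have hmin := hu.2.2.2.resolve_left hune
    apply hmin
    have : u.dropLast = t ++ ([n] ++ r).dropLast := by
      rw [← hr, List.append_assoc, List.dropLast_append_of_ne_nil (by simp : [n] ++ r ≠ [])]
    rw [this, evalL_append, h0, evalL_zero]
  have key : ∀ t, t ∈ TreeOf B → nodeHt B hwf t = S.evalL α t := by
    intro t
    induction t using hwf.induction with
    | _ t IH =>
      intro ht
      obtain ⟨u, hu, hpre⟩ := ht
      have hsort : t.Pairwise (· < ·) := hu.1.sublist hpre.sublist
      have hmem : ∀ x ∈ t, x ∈ M := fun x hx => hu.2.1 x (hpre.sublist.mem hx)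
      rcases eq_or_ne (S.evalL α t) 0 with h0 | h0
      · rw [rank_eq t, h0]
        have : IsEmpty {b // childRel B b t} := ⟨fun b => no_child t h0 b.1 b.2⟩
        rw [ciSup_of_empty]
        exact Ordinal.bot_eq_zero
      · have htΓ : S.evalL α t ≤ Γ := evalL_le S t α hα
        apply le_antisymm
        · rw [rank_eq t]
          apply Ordinal.iSup_le
          rintro ⟨c, hc⟩
          obtain ⟨hcT, n, rfl⟩ := hc
          rw [IH _ ⟨hcT, n, rfl⟩ hcT, evalL_append, Order.succ_le_iff]
          exact fs_lt S _ htΓ h0 n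
        · conv_lhs => rw [← S.sup_eq _ htΓ h0]
          apply Ordinal.iSup_le
          intro n
          obtain ⟨m, hm⟩ := (hM.diff (Set.finite_Iic (max n (t.foldr max 0)))).nonempty
          rw [Set.mem_diff, Set.mem_Iic] at hm
          obtain ⟨hmM, hmk'⟩ := hm
          have hnm : n ≤ m := le_of_lt (lt_of_le_of_lt (le_max_left _ _) (not_le.mp hmk'))
          have hlt : ∀ x ∈ t, x < m := fun x hx =>
            lt_of_le_of_lt ((le_foldr_max hx).trans (le_max_right _ _)) (not_le.mp hmk')
          have hcmem : ∀ x ∈ t ++ [m], x ∈ M := by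
            intro x hx
            rcases List.mem_append.mp hx with hx | hx
            · exact hmem x hx
            · exact (List.mem_singleton.mp hx) ▸ hmM
          obtain ⟨v, hv, hvpre⟩ := extend S M hM α hα (S.evalL α (t ++ [m])) (t ++ [m]) rfl
            (sorted_concat hsort hlt) hcmem
            (Or.inr (by rw [List.dropLast_concat]; exact h0))
          have hcT : (t ++ [m]) ∈ TreeOf B := ⟨v, hv, hvpre⟩
          have hrel : childRel B (t ++ [m]) t := ⟨hcT, m, rfl⟩
          calc S.fs (S.evalL α t) n + 1 ≤ S.fs (S.evalL α t) m + 1 := by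
                exact add_le_add_left (S.mono _ htΓ hnm) 1
            _ = Order.succ (nodeHt B hwf (t ++ [m])) := by
                rw [IH _ hrel hcT, evalL_append]
                exact (Order.succ_eq_add_one _).symm
            _ ≤ ⨆ b : {b // childRel B b t}, Order.succ (nodeHt B hwf b.1) :=
                Ordinal.le_iSup (fun b : {b // childRel B b t} =>
                  Order.succ (nodeHt B hwf b.1)) ⟨t ++ [m], hrel⟩
            _ = nodeHt B hwf t := (rank_eq t).symm
  refine ⟨key, ?_⟩
  obtain ⟨u, hu, _⟩ := extend S M hM α hα α [] rfl (by simp) (by simp) (Or.inl rfl)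
  exact key [] ⟨u, hu, List.nil_prefix⟩
end

section
/- Let B be a smooth barrier with ht(B) = α. Then the sequence α[n] := ht(B_n), where B_n = {t : ⟨n⟩⌢t ∈ B}, is a fundamental sequence for α: it is non-decreasing in n and sup{α[n] + 1 : n ∈ ω} = α. -/
open Ordinal

/-- `B_n = {t : ⟨n⟩⌢t ∈ B}`. -/
def subFront (B : Set (List ℕ)) (n : ℕ) : Set (List ℕ) := {t | n :: t ∈ B}

/- ### Auxiliary lemmas -/

lemma rank_eq' {α} {r : α → α → Prop} (hwf : WellFounded r) (a : α) :
    (hwf.apply a).rank = ⨆ b : {b // r b a}, Order.succ ((hwf.apply b.1).rank) :=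
  (hwf.apply a).rank_eq

lemma rank_lt' {α} {r : α → α → Prop} (hwf : WellFounded r) {a b : α} (h : r a b) :
    (hwf.apply a).rank < (hwf.apply b).rank :=
  Acc.rank_lt_of_rel (hwf.apply b) h

lemma tree_sorted {B : Set (List ℕ)} (hB : IsBlock B) {s : List ℕ} (hs : s ∈ TreeOf B) :
    s.Pairwise (· < ·) := by
  obtain ⟨t, htB, hpre⟩ := hs
  exact (hB.sorted t htB).sublist hpre.sublist

lemma nil_not_mem {B : Set (List ℕ)} (hB : IsBlock B) : [] ∉ B := by
  intro h
  obtain ⟨n, s, hsB, hns⟩ := hB.base_infinite.nonempty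
  have hs : ([] : List ℕ) = s := hB.prefix_free [] h s hsB List.nil_prefix
  rw [← hs] at hns
  exact (List.not_mem_nil (a := n)) hns

/-- Every node of the tree that is not itself in `B` has a child with arbitrarily large label. -/
lemma exists_extend {B : Set (List ℕ)} (hB : IsBlock B) (hbase : sbase B = Set.univ)
    {t : List ℕ} (ht : t ∈ TreeOf B) (htnB : t ∉ B) (a : ℕ) :
    ∃ M, a ≤ M ∧ childRel B (t ++ [M]) t := by
  classical
  set L := t.length with hL
  set M₀ := a + t.sum + 1 with hM₀
  set f : ℕ → ℕ := fun i => if h : i < L then t.get ⟨i, h⟩ else M₀ + i with hf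
  have hft : ∀ i (h : i < L), f i = t.get ⟨i, h⟩ := fun i h => dif_pos h
  have hbig : ∀ i (h : i < L), t.get ⟨i, h⟩ < M₀ := by
    intro i h
    have : t.get ⟨i, h⟩ ≤ t.sum :=
      List.single_le_sum (fun x _ => Nat.zero_le x) _ (t.get_mem ⟨i, h⟩)
    omega
  have hmono : StrictMono f := by
    intro i j hij
    by_cases hi : i < L
    · by_cases hj : j < L
      · rw [hft i hi, hft j hj]
        exact (tree_sorted hB ht).rel_get_of_lt (a := ⟨i, hi⟩) (b := ⟨j, hj⟩) hij
      · rw [hft i hi]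
        simp only [hf, dif_neg hj]
        have := hbig i hi
        omega
    · have hj : ¬ j < L := by omega
      simp only [hf, dif_neg hi, dif_neg hj]
      omega
  obtain ⟨k, hk⟩ := hB.prefix_exists f hmono (fun i => by rw [hbase]; trivial)
  have hkL : L < k := by
    by_contra hle
    push_neg at hle
    have heq : (List.range k).map f = t.take k := by
      apply List.ext_getElem
      · simp [hle, ← hL]
      · intro i h1 h2
        have hik : i < k := by simpa using h1
        have hiL : i < L := lt_of_lt_of_le hik hle
        simp only [List.getElem_map, List.getElem_range, List.getElem_take]
        rw [hft i hiL]
        rfl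
    have hpre : (List.range k).map f <+: t := heq ▸ List.take_prefix k t
    obtain ⟨v, hvB, htv⟩ := ht
    have huv : (List.range k).map f = v := hB.prefix_free _ hk v hvB (hpre.trans htv)
    have h2 : t <+: (List.range k).map f := huv ▸ htv
    have : t = (List.range k).map f :=
      h2.eq_of_length (le_antisymm h2.length_le hpre.length_le)
    exact htnB (this ▸ hk)
  refine ⟨M₀ + L, by omega, ⟨(List.range k).map f, hk, ?_⟩, M₀ + L, rfl⟩
  have heq : t ++ [M₀ + L] = ((List.range k).map f).take (L + 1) := by
    apply List.ext_getElem
    · simp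
      omega
    · intro i h1 h2
      have hiL1 : i < L + 1 := by simpa using h1
      have hik : i < k := by omega
      simp only [List.getElem_take, List.getElem_map, List.getElem_range]
      by_cases hi : i < L
      · rw [List.getElem_append_left hi, hft i hi]
        rfl
      · have hiL : i = L := by omega
        subst hiL
        rw [List.getElem_append_right (le_refl _)]
        simp only [hf, dif_neg (lt_irrefl L)]
        simp
  rw [heq]
  exact List.take_prefix _ _

lemma not_mem_of_child {B : Set (List ℕ)} (hB : IsBlock B) {s : List ℕ} {a : ℕ}
    (hc : s ++ [a] ∈ TreeOf B) : s ∉ B := by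
  intro hsB
  obtain ⟨w, hwB, hcw⟩ := hc
  have hsw : s = w := hB.prefix_free s hsB w hwB ((List.prefix_append s [a]).trans hcw)
  have := hcw.length_le
  rw [← hsw] at this
  simp at this

/-- Monotonicity of rank in the tree of a smooth block: pointwise smaller nodes of the same
length have smaller rank. -/
lemma rank_mono_aux {B : Set (List ℕ)} (hB : IsBlock B) (hsm : IsSmooth B)
    (hbase : sbase B = Set.univ) (hwf : WellFounded (childRel B)) :
    ∀ s t : List ℕ, s ∈ TreeOf B → t ∈ TreeOf B → s.length = t.length →
      (∀ i (hi : i < s.length) (hi' : i < t.length), s.get ⟨i, hi⟩ ≤ t.get ⟨i, hi'⟩) →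
      (hwf.apply s).rank ≤ (hwf.apply t).rank := by
  intro s
  induction s using WellFounded.induction hwf with
  | _ s IH =>
    intro t hs ht hlen hle
    rw [rank_eq' hwf s]
    apply Ordinal.iSup_le
    rintro ⟨c, hc⟩
    obtain ⟨hcT, a, rfl⟩ := hc
    have hchild : childRel B (s ++ [a]) s := ⟨hcT, a, rfl⟩
    have htnB : t ∉ B := by
      intro htB'
      obtain ⟨w, hwB, hcw⟩ := hcT
      have hlw : t.length < w.length := by
        have := hcw.length_le
        simp only [List.length_append, List.length_singleton] at this
        omega
      obtain ⟨i, hi, hi', hlt⟩ := hsm t htB' w hwB hlw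
      have his : i < s.length := by omega
      have hisa : i < (s ++ [a]).length := by
        simp only [List.length_append, List.length_singleton]; omega
      have hsw : s <+: w := (List.prefix_append s [a]).trans hcw
      have hws : w.get ⟨i, hi'⟩ = s.get ⟨i, his⟩ := by
        simp only [List.get_eq_getElem]
        exact (hsw.getElem his).symm
      have := hle i his hi
      rw [hws] at hlt
      omega
    obtain ⟨M, haM, hchild'⟩ := exists_extend hB hbase ht htnB a
    have hIH : (hwf.apply (s ++ [a])).rank ≤ (hwf.apply (t ++ [M])).rank := by
      apply IH (s ++ [a]) hchild (t ++ [M]) hcT hchild'.1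
      · simp [hlen]
      · intro i hi hi'
        simp only [List.length_append, List.length_singleton] at hi hi'
        by_cases h : i < s.length
        · have h' : i < t.length := by omega
          simp only [List.get_eq_getElem]
          rw [List.getElem_append_left h, List.getElem_append_left h']
          exact hle i h h'
        · have h1 : i = s.length := by omega
          subst h1
          simp only [List.get_eq_getElem]
          rw [List.getElem_append_right (le_refl _),
            List.getElem_append_right (le_of_eq hlen.symm)]
          simp only [hlen]
          simpa using haM
    have hlt' : (hwf.apply (t ++ [M])).rank < (hwf.apply t).rank := rank_lt' hwf hchild'
    exact Order.succ_le_iff.mpr (lt_of_le_of_lt hIH hlt')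

lemma tree_cons {B : Set (List ℕ)} {n : ℕ} {t : List ℕ} :
    t ∈ TreeOf (subFront B n) ↔ n :: t ∈ TreeOf B := by
  constructor
  · rintro ⟨u, huB, htu⟩
    exact ⟨n :: u, huB, by simpa [List.cons_prefix_cons] using htu⟩
  · rintro ⟨w, hwB, hpre⟩
    cases w with
    | nil => simp at hpre
    | cons m w' =>
      rw [List.cons_prefix_cons] at hpre
      obtain ⟨rfl, htw⟩ := hpre
      exact ⟨w', hwB, htw⟩

lemma childRel_cons {B : Set (List ℕ)} {n : ℕ} {c s : List ℕ} :
    childRel (subFront B n) c s ↔ childRel B (n :: c) (n :: s) := by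
  unfold childRel
  rw [tree_cons]
  constructor
  · rintro ⟨h1, m, rfl⟩
    exact ⟨h1, m, rfl⟩
  · rintro ⟨h1, m, hm⟩
    refine ⟨h1, m, ?_⟩
    simpa using hm

lemma rank_cons {B : Set (List ℕ)} (hwf : WellFounded (childRel B)) (n : ℕ)
    (hwfn : WellFounded (childRel (subFront B n))) :
    ∀ s, ((hwfn).apply s).rank = (hwf.apply (n :: s)).rank := by
  intro s
  induction s using WellFounded.induction hwfn with
  | _ s IH =>
    rw [rank_eq' hwfn s, rank_eq' hwf (n :: s)]
    apply le_antisymm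
    · apply Ordinal.iSup_le
      rintro ⟨c, hc⟩
      rw [IH c hc]
      exact Ordinal.le_iSup
        (fun b : {b // childRel B b (n :: s)} => Order.succ ((hwf.apply b.1).rank))
        ⟨n :: c, childRel_cons.mp hc⟩
    · apply Ordinal.iSup_le
      rintro ⟨d, hd⟩
      obtain ⟨hdT, m, rfl⟩ := hd
      have hc : childRel (subFront B n) (s ++ [m]) s := childRel_cons.mpr ⟨hdT, m, rfl⟩
      show Order.succ ((hwf.apply (n :: (s ++ [m]))).rank) ≤ _
      rw [← IH (s ++ [m]) hc]
      exact Ordinal.le_iSup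
        (fun b : {b // childRel (subFront B n) b s} => Order.succ ((hwfn.apply b.1).rank))
        ⟨s ++ [m], hc⟩

lemma singleton_child {B : Set (List ℕ)} (hB : IsBlock B) (hbase : sbase B = Set.univ)
    (n : ℕ) : childRel B [n] [] := by
  have hmono : StrictMono (fun i => n + i) := fun i j h => by exact Nat.add_lt_add_left h n
  obtain ⟨k, hk⟩ := hB.prefix_exists _ hmono (fun i => by rw [hbase]; trivial)
  match k, hk with
  | 0, hk =>
    simp only [List.range_zero, List.map_nil] at hk
    exact absurd hk (nil_not_mem hB)
  | k + 1, hk =>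
    refine ⟨⟨(List.range (k + 1)).map (fun i => n + i), hk, ?_⟩, n, rfl⟩
    rw [List.range_succ_eq_map, List.map_cons]
    exact ⟨_, rfl⟩

/-- If `B` is a smooth barrier (with base `ℕ`) and `ht(B) = α`, then `α[n] := ht(B_n)` is a
fundamental sequence for `α`: non-decreasing with `sup {α[n] + 1 : n} = α`. -/
theorem smooth_barrier_fundamental_sequence (B : Set (List ℕ))
    (hB : IsBlock B) (hsm : IsSmooth B) (hbase : sbase B = Set.univ)
    (hwf : WellFounded (childRel B))
    (hwfn : ∀ n : ℕ, WellFounded (childRel (subFront B n)))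
    (α : Ordinal) (hα : htB B hwf = α) :
    Monotone (fun n : ℕ => htB (subFront B n) (hwfn n)) ∧
      (⨆ n : ℕ, htB (subFront B n) (hwfn n) + 1) = α := by
  subst hα
  have hrn : ∀ n : ℕ, htB (subFront B n) (hwfn n) = (hwf.apply [n]).rank := by
    intro n
    exact rank_cons hwf n (hwfn n) []
  constructor
  · intro m n hmn
    show htB (subFront B m) (hwfn m) ≤ htB (subFront B n) (hwfn n)
    rw [hrn m, hrn n]
    apply rank_mono_aux hB hsm hbase hwf [m] [n]
      (singleton_child hB hbase m).1 (singleton_child hB hbase n).1 rfl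
    intro i hi hi'
    have : i = 0 := by simpa using hi
    subst this
    simpa using hmn
  · show (⨆ n : ℕ, htB (subFront B n) (hwfn n) + 1) = (hwf.apply ([] : List ℕ)).rank
    rw [rank_eq' hwf []]
    apply le_antisymm
    · apply Ordinal.iSup_le
      intro n
      rw [hrn n]
      calc (hwf.apply [n]).rank + 1 = Order.succ ((hwf.apply [n]).rank) :=
            (Order.succ_eq_add_one _).symm
        _ ≤ ⨆ b : {b // childRel B b []}, Order.succ ((hwf.apply b.1).rank) :=
            Ordinal.le_iSup
              (fun b : {b // childRel B b []} => Order.succ ((hwf.apply b.1).rank))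
              ⟨[n], singleton_child hB hbase n⟩
    · apply Ordinal.iSup_le
      rintro ⟨b, hb⟩
      obtain ⟨hbT, m, rfl⟩ := hb
      show Order.succ ((hwf.apply [m]).rank) ≤ _
      rw [Order.succ_eq_add_one, ← hrn m]
      exact Ordinal.le_iSup (fun n => htB (subFront B n) (hwfn n) + 1) m
end
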